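/- arXiv:1308.4308 — 2 statements merged into one kernel-verified Lean document; each statement's English description precedes it below -/
import Mathlib

section
/- Let k ≥ 4 be an even integer and let C be the cycle graph on {1,…,k} with edges {r,r+1} (1 ≤ r ≤ k−1) and {1,k}. Then the prism C* over C is bipartite, with vertex bipartition {p_1,p_3,…,p_{k−1}, q_2,q_4,…,q_k} ∪ {p_2,p_4,…,p_k, q_1,q_3,…,q_{k−1}}, and P_C ≠ I_{C*}: under the identification x_{ij} ↔ {p_i,p_j}, x_{ji} ↔ {q_i,q_j} for each edge {i,j} of C with i<j, and x_{ii} ↔ {p_i,q_i}, the ideal P_C is strictly contained in (in particular, not equal to) the kernel of the K-algebra homomorphism sending x_{ij} ↦ t_{p_i}t_{p_j}, x_{ji} ↦ t_{q_i}t_{q_j}, x_{ii} ↦ t_{p_i}t_{q_i}. -/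
open MvPolynomial

/-- The cycle graph on `{1,…,k}` (here `Fin k`, with `r : Fin k` standing for the vertex
`r+1`): edges `{r, r+1}` for `1 ≤ r ≤ k-1` and `{1, k}`. -/
def cycleGraph' (k : ℕ) : SimpleGraph (Fin k) where
  Adj i j := i ≠ j ∧ ((i.val + 1) % k = j.val ∨ (j.val + 1) % k = i.val)
  symm := by
    constructor
    rintro i j ⟨hne, h⟩
    exact ⟨hne.symm, h.symm⟩
  loopless := by
    constructor
    rintro i ⟨hne, -⟩
    exact hne rfl

instance (k : ℕ) : DecidableRel (cycleGraph' k).Adj := fun i j =>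
  inferInstanceAs (Decidable (i ≠ j ∧ ((i.val + 1) % k = j.val ∨ (j.val + 1) % k = i.val)))

/-- The set of variables of `S`: one variable `x_{ii}` for each vertex `i` of `G` and two
variables `x_{ij}`, `x_{ji}` for each edge `{i,j}` of `G`. -/
abbrev VarSet (k : ℕ) (G : SimpleGraph (Fin k)) : Type :=
  {p : Fin k × Fin k // p.1 = p.2 ∨ G.Adj p.1 p.2}

/-- The diagonal 2-minor `f_{ij} = x_{ii} x_{jj} - x_{ij} x_{ji}`. -/
noncomputable def fij (K : Type) [Field K] {k : ℕ} {G : SimpleGraph (Fin k)}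
    {i j : Fin k} (h : G.Adj i j) : MvPolynomial (VarSet k G) K :=
  X ⟨(i, i), Or.inl rfl⟩ * X ⟨(j, j), Or.inl rfl⟩ -
    X ⟨(i, j), Or.inr h⟩ * X ⟨(j, i), Or.inr h.symm⟩

/-- The ideal `P_G` generated by the diagonal 2-minors `f_{ij}` for edges `{i,j}`, `i < j`. -/
noncomputable def PG (K : Type) [Field K] (k : ℕ) (G : SimpleGraph (Fin k)) :
    Ideal (MvPolynomial (VarSet k G) K) :=
  Ideal.span {f | ∃ i j : Fin k, ∃ h : G.Adj i j, i < j ∧ f = fij K h}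

/-- The prism `G*` over `G`: vertices `p_i = Sum.inl i` and `q_i = Sum.inr i`, with edges
`{p_i, p_j}` and `{q_i, q_j}` for every edge `{i,j}` of `G`, together with the rungs
`{p_i, q_i}`. -/
def prism {V : Type} (G : SimpleGraph V) : SimpleGraph (V ⊕ V) where
  Adj x y :=
    match x, y with
    | Sum.inl i, Sum.inl j => G.Adj i j
    | Sum.inr i, Sum.inr j => G.Adj i j
    | Sum.inl i, Sum.inr j => i = j
    | Sum.inr i, Sum.inl j => i = j
  symm := by
    constructor
    rintro (i | i) (j | j) h
    · exact G.adj_symm h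
    · exact h.symm
    · exact h.symm
    · exact G.adj_symm h
  loopless := by
    constructor
    rintro (i | i) h
    · exact G.irrefl h
    · exact G.irrefl h

/-- The `K`-algebra homomorphism whose kernel is the toric ideal `I_{C*}` of the prism `C*`,
under the identification `x_{ij} ↔ {p_i,p_j}`, `x_{ji} ↔ {q_i,q_j}`, `x_{ii} ↔ {p_i,q_i}`:
it sends `x_{ij} ↦ t_{p_i}t_{p_j}`, `x_{ji} ↦ t_{q_i}t_{q_j}` (for edges `{i,j}` with `i < j`)
and `x_{ii} ↦ t_{p_i}t_{q_i}`. -/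
noncomputable def prismMap (K : Type) [Field K] (k : ℕ) (G : SimpleGraph (Fin k)) :
    MvPolynomial (VarSet k G) K →ₐ[K] MvPolynomial (Fin k ⊕ Fin k) K :=
  aeval fun v =>
    if v.1.1 = v.1.2 then X (Sum.inl v.1.1) * X (Sum.inr v.1.1)
    else if v.1.1 < v.1.2 then X (Sum.inl v.1.1) * X (Sum.inl v.1.2)
    else X (Sum.inr v.1.1) * X (Sum.inr v.1.2)

/-- The 2-coloring of the prism `C*` realizing the bipartition
`{p_1,p_3,…,p_{k−1}, q_2,q_4,…,q_k} ∪ {p_2,p_4,…,p_k, q_1,q_3,…,q_{k−1}}` (in the 1-based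
numbering of the paper; `p_i` is `Sum.inl i`, `q_i` is `Sum.inr i`). -/
def prismColor (k : ℕ) : Fin k ⊕ Fin k → ZMod 2 :=
  Sum.elim (fun i => (i.val : ZMod 2)) (fun i => (i.val : ZMod 2) + 1)


section Aux

open Finset

lemma prod_pair {M : Type*} [CommMonoid M] (c : ℕ → M) :
    ∀ m, (∏ i ∈ Finset.range m, (c (2*i) * c (2*i+1))) = ∏ j ∈ Finset.range (2*m), c j
  | 0 => by simp
  | (m+1) => by
      rw [Finset.prod_range_succ, prod_pair c m, Nat.mul_succ,
        show 2*m+2 = 2*m+1+1 from rfl, Finset.prod_range_succ, Finset.prod_range_succ,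
        ← mul_assoc]

lemma cast_mod_two (k n : ℕ) (hke : Even k) : ((n % k : ℕ) : ZMod 2) = (n : ZMod 2) := by
  obtain ⟨m, hm⟩ := hke
  have hk0 : (k : ZMod 2) = 0 := by
    subst hm; push_cast
    have : (2 : ZMod 2) = 0 := by decide
    rw [show (m : ZMod 2) + m = m * 2 by ring, this, mul_zero]
  conv_rhs => rw [← Nat.mod_add_div n k]
  push_cast
  rw [hk0]
  ring

variable (K : Type) [Field K] (k : ℕ)

/-- The vertex `a % k` of the cycle. -/
def cvx (hk : 2 ≤ k) (a : ℕ) : Fin k := ⟨a % k, Nat.mod_lt _ (by omega)⟩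

lemma cvx_adj (hk : 2 ≤ k) (a : ℕ) :
    (cycleGraph' k).Adj (cvx k hk a) (cvx k hk (a+1)) := by
  constructor
  · intro h
    have hv : a % k = (a + 1) % k := congrArg Fin.val h
    have h1 : (a % k + 1) % k = (a + 1) % k := Nat.mod_add_mod a k 1
    have h2 : a % k < k := Nat.mod_lt _ (by omega)
    rcases Nat.lt_or_ge (a % k + 1) k with h' | h'
    · rw [Nat.mod_eq_of_lt h'] at h1; omega
    · have h3 : a % k + 1 = k := by omega
      rw [h3, Nat.mod_self] at h1
      omega
  · exact Or.inl (Nat.mod_add_mod a k 1)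

/-- The `p`-variable attached to the edge `{a, a+1}` (mod `k`). -/
noncomputable def evar (hk : 2 ≤ k) (a : ℕ) :
    MvPolynomial (VarSet k (cycleGraph' k)) K :=
  X ⟨(cvx k hk a, cvx k hk (a+1)), Or.inr (cvx_adj k hk a)⟩

/-- The `p`-variable attached to the edge `{1, k}` (0-based: `{0, k-1}`). -/
noncomputable def lastvar (hk : 2 ≤ k) :
    MvPolynomial (VarSet k (cycleGraph' k)) K :=
  X ⟨((⟨0, by omega⟩ : Fin k), (⟨k-1, by omega⟩ : Fin k)),
    Or.inr ⟨by
        intro h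
        have := congrArg Fin.val h
        simp at this
        omega,
      Or.inr (by simp only [show k - 1 + 1 = k by omega, Nat.mod_self])⟩⟩

/-- The cycle binomial. -/
noncomputable def gbin (hk : 4 ≤ k) : MvPolynomial (VarSet k (cycleGraph' k)) K :=
  (∏ i ∈ Finset.range (k/2), evar K k (by omega) (2*i)) -
    lastvar K k (by omega) * ∏ i ∈ Finset.range (k/2 - 1), evar K k (by omega) (2*i+1)

/-- The image variable `t_{p_a}`. -/
noncomputable def pvarT (hk : 2 ≤ k) (a : ℕ) : MvPolynomial (Fin k ⊕ Fin k) K :=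
  X (Sum.inl (cvx k hk a))

lemma prismMap_evar (hk : 2 ≤ k) (a : ℕ) (h : a + 1 < k) :
    prismMap K k (cycleGraph' k) (evar K k hk a) = pvarT K k hk a * pvarT K k hk (a+1) := by
  have h1 : a % k = a := Nat.mod_eq_of_lt (by omega)
  have h2 : (a+1) % k = a+1 := Nat.mod_eq_of_lt h
  unfold prismMap evar pvarT
  rw [aeval_X]
  rw [if_neg, if_pos]
  · show (cvx k hk a) < (cvx k hk (a+1))
    rw [Fin.lt_def]
    show a % k < (a+1) % k
    omega
  · intro heq
    have := congrArg Fin.val heq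
    change a % k = (a+1) % k at this
    omega

lemma prismMap_lastvar (hk : 2 ≤ k) (hk4 : 4 ≤ k) :
    prismMap K k (cycleGraph' k) (lastvar K k hk) = pvarT K k hk 0 * pvarT K k hk (k-1) := by
  have e0 : cvx k hk 0 = (⟨0, by omega⟩ : Fin k) := Fin.ext (Nat.zero_mod k)
  have e1 : cvx k hk (k-1) = (⟨k-1, by omega⟩ : Fin k) :=
    Fin.ext (Nat.mod_eq_of_lt (by omega))
  unfold prismMap lastvar pvarT
  rw [aeval_X]
  rw [if_neg, if_pos, e0, e1]
  · show ((⟨0, by omega⟩ : Fin k)) < (⟨k-1, by omega⟩ : Fin k)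
    rw [Fin.lt_def]
    show 0 < k - 1
    omega
  · intro heq
    have := congrArg Fin.val heq
    change (0 : ℕ) = k - 1 at this
    omega

/-- The substitution killing all variables `x_{ii}` and `x_{ji}` (`i < j`). -/
noncomputable def killQ : MvPolynomial (VarSet k (cycleGraph' k)) K →ₐ[K]
    MvPolynomial (VarSet k (cycleGraph' k)) K :=
  aeval fun v => if v.1.1 < v.1.2 then X v else 0

lemma killQ_evar (hk : 2 ≤ k) (a : ℕ) (h : a + 1 < k) :
    killQ K k (evar K k hk a) = evar K k hk a := by
  have h1 : a % k = a := Nat.mod_eq_of_lt (by omega)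
  have h2 : (a+1) % k = a+1 := Nat.mod_eq_of_lt h
  unfold killQ evar
  rw [aeval_X, if_pos]
  show (cvx k hk a) < (cvx k hk (a+1))
  rw [Fin.lt_def]
  show a % k < (a+1) % k
  omega

lemma killQ_lastvar (hk : 2 ≤ k) (hk4 : 4 ≤ k) :
    killQ K k (lastvar K k hk) = lastvar K k hk := by
  unfold killQ lastvar
  rw [aeval_X, if_pos]
  show ((⟨0, by omega⟩ : Fin k)) < (⟨k-1, by omega⟩ : Fin k)
  rw [Fin.lt_def]
  show 0 < k - 1
  omega

lemma PG_le_ker_killQ :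
    PG K k (cycleGraph' k) ≤ RingHom.ker (killQ K k).toRingHom := by
  rw [PG, Ideal.span_le]
  rintro f ⟨i, j, h, hij, rfl⟩
  simp only [SetLike.mem_coe, RingHom.mem_ker]
  show killQ K k (fij K h) = 0
  unfold fij killQ
  rw [map_sub, map_mul, map_mul, aeval_X, aeval_X, aeval_X, aeval_X]
  rw [if_neg (lt_irrefl i), if_neg (lt_irrefl j), if_pos hij, if_neg (asymm hij)]
  ring

lemma PG_le_ker_prismMap :
    PG K k (cycleGraph' k) ≤ RingHom.ker (prismMap K k (cycleGraph' k)).toRingHom := by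
  rw [PG, Ideal.span_le]
  rintro f ⟨i, j, h, hij, rfl⟩
  simp only [SetLike.mem_coe, RingHom.mem_ker]
  show prismMap K k (cycleGraph' k) (fij K h) = 0
  unfold fij prismMap
  rw [map_sub, map_mul, map_mul, aeval_X, aeval_X, aeval_X, aeval_X]
  rw [if_pos (rfl : i = i), if_pos (rfl : j = j), if_neg (ne_of_lt hij), if_pos hij,
    if_neg (ne_of_gt hij), if_neg (asymm hij)]
  ring

lemma cycle_step {M : Type*} [CommRing M] (f : ℕ → M) (n' : ℕ) :
    f 0 * f (n'+1) * ∏ j ∈ Finset.range n', f (j+1) = ∏ j ∈ Finset.range (n'+2), f j := by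
  rw [show n'+2 = n'+1+1 from rfl, Finset.prod_range_succ, Finset.prod_range_succ']
  ring

/-- The evaluation sending `x_{12} ↦ 0` and every other variable to `1`. -/
def epsf : VarSet k (cycleGraph' k) → K :=
  fun v => if v.1.1.val = 0 ∧ v.1.2.val = 1 then 0 else 1

lemma eval_epsf_evar_zero (hk : 2 ≤ k) : eval (epsf K k) (evar K k hk 0) = 0 := by
  unfold evar epsf
  simp only [eval_X]
  exact if_pos ⟨Nat.zero_mod k, Nat.mod_eq_of_lt (by omega : (0+1:ℕ) < k)⟩

lemma eval_epsf_evar_odd (hk : 2 ≤ k) (i : ℕ) (h : 2*i+1 < k) :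
    eval (epsf K k) (evar K k hk (2*i+1)) = 1 := by
  unfold evar epsf
  simp only [eval_X]
  rw [if_neg]
  rintro ⟨ha, -⟩
  have ha' : (2*i+1) % k = 0 := ha
  rw [Nat.mod_eq_of_lt h] at ha'
  omega

lemma eval_epsf_lastvar (hk : 2 ≤ k) (hk4 : 4 ≤ k) :
    eval (epsf K k) (lastvar K k hk) = 1 := by
  unfold lastvar epsf
  simp only [eval_X]
  rw [if_neg]
  rintro ⟨-, hb⟩
  have hb' : k - 1 = 1 := hb
  omega

end Aux

/-- For an even cycle `C` of length `k ≥ 4`, the prism `C*` is bipartite,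
with the stated bipartition, and `P_C` is strictly contained in (in particular, not equal to)
the toric ideal `I_{C*}`. -/
theorem prism_of_even_cycle (K : Type) [Field K] (k : ℕ) (hk : 4 ≤ k) (hke : Even k) :
    (∀ x y, (prism (cycleGraph' k)).Adj x y → prismColor k x ≠ prismColor k y)
      ∧ PG K k (cycleGraph' k) < RingHom.ker (prismMap K k (cycleGraph' k)).toRingHom := by
  have hk2 : 2 ≤ k := by omega
  obtain ⟨m, hm⟩ := hke
  have key : ∀ a : ZMod 2, a ≠ a + 1 := by decide
  constructor
  · rintro (i | i) (j | j) hadj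
    · have hadj' : (cycleGraph' k).Adj i j := hadj
      obtain ⟨hne, h | h⟩ := hadj'
      · simp only [prismColor, Sum.elim_inl]
        have hcast : (j.val : ZMod 2) = (i.val : ZMod 2) + 1 := by
          rw [← h, cast_mod_two k _ ⟨m, hm⟩]; push_cast; ring
        rw [hcast]
        exact key _
      · simp only [prismColor, Sum.elim_inl]
        have hcast : (i.val : ZMod 2) = (j.val : ZMod 2) + 1 := by
          rw [← h, cast_mod_two k _ ⟨m, hm⟩]; push_cast; ring
        rw [hcast]
        exact fun hc => key _ hc.symm
    · have hij : i = j := hadj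
      subst hij
      simp only [prismColor, Sum.elim_inl, Sum.elim_inr]
      exact key _
    · have hij : i = j := hadj
      subst hij
      simp only [prismColor, Sum.elim_inl, Sum.elim_inr]
      exact fun hc => key _ hc.symm
    · have hadj' : (cycleGraph' k).Adj i j := hadj
      obtain ⟨hne, h | h⟩ := hadj'
      · simp only [prismColor, Sum.elim_inr]
        have hcast : (j.val : ZMod 2) = (i.val : ZMod 2) + 1 := by
          rw [← h, cast_mod_two k _ ⟨m, hm⟩]; push_cast; ring
        intro hc
        have hc' : (i.val : ZMod 2) = (j.val : ZMod 2) := add_right_cancel hc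
        rw [hcast] at hc'
        exact key _ hc'
      · simp only [prismColor, Sum.elim_inr]
        have hcast : (i.val : ZMod 2) = (j.val : ZMod 2) + 1 := by
          rw [← h, cast_mod_two k _ ⟨m, hm⟩]; push_cast; ring
        intro hc
        have hc' : (i.val : ZMod 2) = (j.val : ZMod 2) := add_right_cancel hc
        exact key _ (hc'.symm.trans hcast)
  · -- computations for the cycle binomial
    have hA : ∀ pf : 2 ≤ k,
        prismMap K k (cycleGraph' k) (∏ i ∈ Finset.range (k/2), evar K k pf (2*i))
          = ∏ j ∈ Finset.range k, pvarT K k hk2 j := by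
      intro pf
      rw [map_prod]
      have hstep : ∏ i ∈ Finset.range (k/2), prismMap K k (cycleGraph' k) (evar K k pf (2*i))
          = ∏ i ∈ Finset.range (k/2), (pvarT K k hk2 (2*i) * pvarT K k hk2 (2*i+1)) := by
        refine Finset.prod_congr rfl fun i hi => ?_
        rw [Finset.mem_range] at hi
        exact prismMap_evar K k hk2 (2*i) (by omega)
      rw [hstep, prod_pair (pvarT K k hk2) (k/2), show 2*(k/2) = k by omega]
    have hB : ∀ pf : 2 ≤ k,
        prismMap K k (cycleGraph' k)
            (lastvar K k pf * ∏ i ∈ Finset.range (k/2 - 1), evar K k pf (2*i+1))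
          = ∏ j ∈ Finset.range k, pvarT K k hk2 j := by
      intro pf
      rw [map_mul, map_prod]
      have hl : prismMap K k (cycleGraph' k) (lastvar K k pf)
          = pvarT K k hk2 0 * pvarT K k hk2 (k-1) := prismMap_lastvar K k hk2 hk
      have hstep : ∏ i ∈ Finset.range (k/2-1), prismMap K k (cycleGraph' k) (evar K k pf (2*i+1))
          = ∏ i ∈ Finset.range (k/2-1),
              ((fun j => pvarT K k hk2 (j+1)) (2*i) * (fun j => pvarT K k hk2 (j+1)) (2*i+1)) := by
        refine Finset.prod_congr rfl fun i hi => ?_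
        rw [Finset.mem_range] at hi
        show prismMap K k (cycleGraph' k) (evar K k pf (2*i+1))
          = pvarT K k hk2 (2*i+1) * pvarT K k hk2 (2*i+1+1)
        exact prismMap_evar K k hk2 (2*i+1) (by omega)
      rw [hl, hstep, prod_pair (fun j => pvarT K k hk2 (j+1)) (k/2-1),
        show 2*(k/2-1) = k-2 by omega]
      have hcyc := cycle_step (pvarT K k hk2) (k-2)
      rw [show (k-2)+1 = k-1 by omega, show (k-2)+2 = k by omega] at hcyc
      exact hcyc
    have hgker : prismMap K k (cycleGraph' k) (gbin K k hk) = 0 := by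
      unfold gbin
      rw [map_sub, hA _, hB _, sub_self]
    have hgfix : killQ K k (gbin K k hk) = gbin K k hk := by
      unfold gbin
      rw [map_sub, map_mul]
      have h1 : ∀ pf : 2 ≤ k,
          killQ K k (∏ i ∈ Finset.range (k/2), evar K k pf (2*i))
            = ∏ i ∈ Finset.range (k/2), evar K k pf (2*i) := by
        intro pf
        rw [map_prod]
        refine Finset.prod_congr rfl fun i hi => ?_
        rw [Finset.mem_range] at hi
        exact killQ_evar K k pf (2*i) (by omega)
      have h2 : ∀ pf : 2 ≤ k,
          killQ K k (∏ i ∈ Finset.range (k/2-1), evar K k pf (2*i+1))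
            = ∏ i ∈ Finset.range (k/2-1), evar K k pf (2*i+1) := by
        intro pf
        rw [map_prod]
        refine Finset.prod_congr rfl fun i hi => ?_
        rw [Finset.mem_range] at hi
        exact killQ_evar K k pf (2*i+1) (by omega)
      rw [h1 _, h2 _, killQ_lastvar K k hk2 hk]
    have heval : eval (epsf K k) (gbin K k hk) = -1 := by
      unfold gbin
      rw [map_sub, map_mul, map_prod, map_prod]
      have h1 : ∀ pf : 2 ≤ k,
          ∏ i ∈ Finset.range (k/2), eval (epsf K k) (evar K k pf (2*i)) = 0 := by
        intro pf
        apply Finset.prod_eq_zero (Finset.mem_range.mpr (show 0 < k/2 by omega))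
        exact eval_epsf_evar_zero K k pf
      have h3 : ∀ pf : 2 ≤ k,
          ∏ i ∈ Finset.range (k/2-1), eval (epsf K k) (evar K k pf (2*i+1)) = 1 := by
        intro pf
        apply Finset.prod_eq_one
        intro i hi
        rw [Finset.mem_range] at hi
        exact eval_epsf_evar_odd K k pf i (by omega)
      rw [h1 _, h3 _, eval_epsf_lastvar K k hk2 hk]
      norm_num
    have hgnotin : gbin K k hk ∉ PG K k (cycleGraph' k) := by
      intro hmem
      have h0 : killQ K k (gbin K k hk) = 0 :=
        RingHom.mem_ker.mp (PG_le_ker_killQ K k hmem)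
      rw [hgfix] at h0
      rw [h0, map_zero] at heval
      exact absurd heval (by norm_num)
    refine lt_of_le_of_ne (PG_le_ker_prismMap K k) (fun heq => hgnotin ?_)
    rw [heq]
    exact RingHom.mem_ker.mpr hgker
end

section
/- Let k ≥ 4 be an even integer and let C be the cycle graph on {1,…,k} with edges {r,r+1} (1 ≤ r ≤ k−1) and {1,k}. Then P_C = I_{C̄}: the ideal P_C equals the kernel of the K-algebra homomorphism from S to K[t_{p_1},…,t_{p_k},t_{q_1},…,t_{q_k}] sending x_{r,r+1} ↦ t_{p_r}t_{p_{r+1}} and x_{r+1,r} ↦ t_{q_r}t_{q_{r+1}} for 1 ≤ r ≤ k−1, x_{1k} ↦ t_{p_1}t_{q_k}, x_{k1} ↦ t_{p_k}t_{q_1}, and x_{rr} ↦ t_{p_r}t_{q_r} for 1 ≤ r ≤ k; that is, P_C is the toric ideal of the Möbius-band graph C̄ under this variable–edge identification. -/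
open MvPolynomial

/-- The `K`-algebra homomorphism from `S` to `K[t_{p_1},…,t_{p_k},t_{q_1},…,t_{q_k}]`
(with `t_{p_r} = X (Sum.inl r)`, `t_{q_r} = X (Sum.inr r)`) sending
`x_{r,r+1} ↦ t_{p_r}t_{p_{r+1}}` and `x_{r+1,r} ↦ t_{q_r}t_{q_{r+1}}` for `1 ≤ r ≤ k−1`,
`x_{1k} ↦ t_{p_1}t_{q_k}`, `x_{k1} ↦ t_{p_k}t_{q_1}`, and `x_{rr} ↦ t_{p_r}t_{q_r}`; its
kernel is the toric ideal of the Möbius-band graph `C̄`. -/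
noncomputable def moebiusMap (K : Type) [Field K] (k : ℕ) :
    MvPolynomial (VarSet k (cycleGraph' k)) K →ₐ[K] MvPolynomial (Fin k ⊕ Fin k) K :=
  aeval fun v =>
    if v.1.1 = v.1.2 then X (Sum.inl v.1.1) * X (Sum.inr v.1.1)
    else if v.1.1.val + 1 = v.1.2.val then X (Sum.inl v.1.1) * X (Sum.inl v.1.2)
    else if v.1.2.val + 1 = v.1.1.val then X (Sum.inr v.1.2) * X (Sum.inr v.1.1)
    else X (Sum.inl v.1.1) * X (Sum.inr v.1.2)

namespace Moebius

open Finsupp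

variable {k : ℕ} [NeZero k]

section FinLemmas
variable (hk : 3 ≤ k)
include hk

lemma val_one' : (1 : Fin k).val = 1 := by
  rw [Fin.val_one' k, Nat.mod_eq_of_lt (by omega)]

lemma val_add_one (r : Fin k) : (r + 1).val = (r.val + 1) % k := by
  rw [Fin.add_def, val_one' hk]

lemma val_add_one_of_lt {r : Fin k} (h : r.val < k - 1) : (r + 1).val = r.val + 1 := by
  rw [val_add_one hk, Nat.mod_eq_of_lt (by omega)]

lemma val_add_one_last {r : Fin k} (h : r.val = k - 1) : (r + 1).val = 0 := by
  rw [val_add_one hk, h]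
  have h2 : k - 1 + 1 = k := by omega
  rw [h2, Nat.mod_self]

lemma val_add_one_cases (r : Fin k) :
    (r.val < k - 1 ∧ (r + 1).val = r.val + 1) ∨ (r.val = k - 1 ∧ (r + 1).val = 0) := by
  rcases Nat.lt_or_ge r.val (k - 1) with h | h
  · exact Or.inl ⟨h, val_add_one_of_lt hk h⟩
  · have := r.isLt
    have h' : r.val = k - 1 := by omega
    exact Or.inr ⟨h', val_add_one_last hk h'⟩

lemma ne_add_one (r : Fin k) : r ≠ r + 1 := by
  intro h
  have := congrArg Fin.val h
  rcases val_add_one_cases hk r with ⟨h1, h2⟩ | ⟨h1, h2⟩ <;> omega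

lemma sub_one_val {t : Fin k} (h : t ≠ 0) : (t - 1).val = t.val - 1 := by
  have ht : 0 < t.val := by
    rcases Nat.eq_zero_or_pos t.val with h' | h'
    · exact absurd (Fin.ext (h'.trans (by simp)) : t = 0) h
    · exact h'
  rw [Fin.sub_def, val_one' hk]
  have h2 : (t.val + (k - 1)) % k = t.val - 1 := by
    have h3 : t.val + (k - 1) = (t.val - 1) + k := by omega
    rw [h3, Nat.add_mod_right, Nat.mod_eq_of_lt (by omega)]
  simpa [Nat.add_comm] using h2

lemma sub_one_add_one {t : Fin k} (h : t ≠ 0) : (t - 1) + 1 = t := by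
  apply Fin.ext
  have h1 := sub_one_val hk h
  have ht : 0 < t.val := by
    rcases Nat.eq_zero_or_pos t.val with h' | h'
    · exact absurd (Fin.ext (h'.trans (by simp)) : t = 0) h
    · exact h'
  have := t.isLt
  rw [val_add_one_of_lt hk (by omega), h1]
  omega

end FinLemmas

end Moebius

namespace Moebius

open Finsupp MvPolynomial

variable {k : ℕ} [NeZero k]

section Vars
variable (hk : 3 ≤ k)

abbrev Var (k : ℕ) : Type := VarSet k (cycleGraph' k)

include hk in
lemma adj_fwd (r : Fin k) : (cycleGraph' k).Adj r (r + 1) := by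
  refine ⟨ne_add_one hk r, Or.inl ?_⟩
  rw [val_add_one hk]

def diagV (hk : 3 ≤ k) (r : Fin k) : Var k := ⟨(r, r), Or.inl rfl⟩
def fwdV (hk : 3 ≤ k) (r : Fin k) : Var k := ⟨(r, r + 1), Or.inr (adj_fwd hk r)⟩
def bwdV (hk : 3 ≤ k) (r : Fin k) : Var k := ⟨(r + 1, r), Or.inr (adj_fwd hk r).symm⟩

lemma diagV_inj : Function.Injective (diagV hk) := by
  intro a b h
  simpa [diagV, Prod.ext_iff] using congrArg (fun v => v.1.1) h

lemma fwdV_inj : Function.Injective (fwdV hk) := by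
  intro a b h
  simpa [fwdV, Prod.ext_iff] using congrArg (fun v => v.1.1) h

lemma bwdV_inj : Function.Injective (bwdV hk) := by
  intro a b h
  simpa [bwdV, Prod.ext_iff] using congrArg (fun v => v.1.2) h

lemma diagV_ne_fwdV (r s : Fin k) : diagV hk r ≠ fwdV hk s := by
  intro h
  rw [Subtype.ext_iff, Prod.ext_iff] at h
  obtain ⟨h1, h2⟩ := h
  simp only [diagV, fwdV] at h1 h2
  exact ne_add_one hk s (h1 ▸ h2)

lemma diagV_ne_bwdV (r s : Fin k) : diagV hk r ≠ bwdV hk s := by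
  intro h
  rw [Subtype.ext_iff, Prod.ext_iff] at h
  obtain ⟨h1, h2⟩ := h
  simp only [diagV, bwdV] at h1 h2
  exact ne_add_one hk s (h2 ▸ h1)

lemma fwdV_ne_bwdV (r s : Fin k) : fwdV hk r ≠ bwdV hk s := by
  intro h
  rw [Subtype.ext_iff, Prod.ext_iff] at h
  obtain ⟨h1, h2⟩ := h
  simp only [fwdV, bwdV] at h1 h2
  -- r = s + 1, r + 1 = s
  have h3 : s + 1 + 1 = s := by rw [← h1, h2]
  have := congrArg Fin.val h3
  rcases val_add_one_cases hk s with ⟨hs, hs2⟩ | ⟨hs, hs2⟩ <;>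
    rcases val_add_one_cases hk (s+1) with ⟨ht, ht2⟩ | ⟨ht, ht2⟩ <;> omega

lemma var_cases (v : Var k) :
    (∃ r, v = diagV hk r) ∨ (∃ r, v = fwdV hk r) ∨ (∃ r, v = bwdV hk r) := by
  obtain ⟨⟨i, j⟩, hij⟩ := v
  rcases hij with h | ⟨hne, h | h⟩
  · exact Or.inl ⟨i, by obtain rfl : i = j := h; rfl⟩
  · refine Or.inr (Or.inl ⟨i, ?_⟩)
    have : j = i + 1 := by
      apply Fin.ext
      rw [val_add_one hk, h]
    simp [fwdV, this]
  · refine Or.inr (Or.inr ⟨j, ?_⟩)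
    have : i = j + 1 := by
      apply Fin.ext
      rw [val_add_one hk, h]
    simp [bwdV, this]

/-- The equivalence `Fin k ⊕ Fin k ⊕ Fin k ≃ Var k`. -/
noncomputable def varEquiv : (Fin k ⊕ Fin k ⊕ Fin k) ≃ Var k := by
  apply Equiv.ofBijective (fun x => Sum.elim (diagV hk) (Sum.elim (fwdV hk) (bwdV hk)) x)
  constructor
  · rintro (a | a | a) (b | b | b) h <;>
      simp only [Sum.elim_inl, Sum.elim_inr] at h
    · rw [diagV_inj hk h]
    · exact absurd h (diagV_ne_fwdV hk a b)
    · exact absurd h (diagV_ne_bwdV hk a b)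
    · exact absurd h.symm (diagV_ne_fwdV hk b a)
    · rw [fwdV_inj hk h]
    · exact absurd h (fwdV_ne_bwdV hk a b)
    · exact absurd h.symm (diagV_ne_bwdV hk b a)
    · exact absurd h.symm (fwdV_ne_bwdV hk b a)
    · rw [bwdV_inj hk h]
  · intro v
    rcases var_cases hk v with ⟨r, h⟩ | ⟨r, h⟩ | ⟨r, h⟩
    · exact ⟨Sum.inl r, h.symm⟩
    · exact ⟨Sum.inr (Sum.inl r), h.symm⟩
    · exact ⟨Sum.inr (Sum.inr r), h.symm⟩

end Vars

end Moebius

namespace Moebius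

open Finsupp MvPolynomial

variable {K : Type} [Field K] {k : ℕ} [NeZero k]

section Emap
variable (hk : 3 ≤ k)

/-- First vertex of the edge assigned to a variable. -/
def i1 (v : Var k) : Fin k ⊕ Fin k :=
  if v.1.1 = v.1.2 then Sum.inl v.1.1
  else if v.1.1.val + 1 = v.1.2.val then Sum.inl v.1.1
  else if v.1.2.val + 1 = v.1.1.val then Sum.inr v.1.2
  else Sum.inl v.1.1

/-- Second vertex of the edge assigned to a variable. -/
def i2 (v : Var k) : Fin k ⊕ Fin k :=
  if v.1.1 = v.1.2 then Sum.inr v.1.1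
  else if v.1.1.val + 1 = v.1.2.val then Sum.inl v.1.2
  else if v.1.2.val + 1 = v.1.1.val then Sum.inr v.1.1
  else Sum.inr v.1.2

lemma moebiusMap_eq :
    moebiusMap K k = aeval (fun v : Var k => X (i1 v) * X (i2 v)) := by
  unfold moebiusMap i1 i2
  congr 1
  funext v
  split_ifs <;> rfl

include hk

lemma i1_diag (r : Fin k) : i1 (diagV hk r) = Sum.inl r := by simp [i1, diagV]
lemma i2_diag (r : Fin k) : i2 (diagV hk r) = Sum.inr r := by simp [i2, diagV]

lemma i1_fwd (r : Fin k) : i1 (fwdV hk r) = Sum.inl r := by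
  dsimp only [i1, fwdV]
  have hne := ne_add_one hk r
  rcases val_add_one_cases hk r with ⟨h1, h2⟩ | ⟨h1, h2⟩ <;>
    · split_ifs <;> first | rfl | omega | exact absurd ‹_› hne

lemma i2_fwd_lt {r : Fin k} (h : r.val < k - 1) : i2 (fwdV hk r) = Sum.inl (r + 1) := by
  dsimp only [i2, fwdV]
  have hne := ne_add_one hk r
  have h2 := val_add_one_of_lt hk h
  split_ifs <;> first | rfl | omega | exact absurd ‹_› hne

lemma i2_fwd_last {r : Fin k} (h : r.val = k - 1) : i2 (fwdV hk r) = Sum.inr (r + 1) := by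
  dsimp only [i2, fwdV]
  have hne := ne_add_one hk r
  have h2 := val_add_one_last hk h
  split_ifs <;> first | rfl | omega | exact absurd ‹_› hne

lemma i1_bwd_lt {r : Fin k} (h : r.val < k - 1) : i1 (bwdV hk r) = Sum.inr r := by
  dsimp only [i1, bwdV]
  have hne := (ne_add_one hk r).symm
  have h2 := val_add_one_of_lt hk h
  split_ifs <;> first | rfl | omega | exact absurd ‹_› hne

lemma i1_bwd_last {r : Fin k} (h : r.val = k - 1) : i1 (bwdV hk r) = Sum.inl (r + 1) := by
  dsimp only [i1, bwdV]
  have hne := (ne_add_one hk r).symm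
  have h2 := val_add_one_last hk h
  split_ifs <;> first | rfl | omega | exact absurd ‹_› hne

lemma i2_bwd_lt {r : Fin k} (h : r.val < k - 1) : i2 (bwdV hk r) = Sum.inr (r + 1) := by
  dsimp only [i2, bwdV]
  have hne := (ne_add_one hk r).symm
  have h2 := val_add_one_of_lt hk h
  split_ifs <;> first | rfl | omega | exact absurd ‹_› hne

lemma i2_bwd_last {r : Fin k} (h : r.val = k - 1) : i2 (bwdV hk r) = Sum.inr r := by
  dsimp only [i2, bwdV]
  have hne := (ne_add_one hk r).symm
  have h2 := val_add_one_last hk h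
  split_ifs <;> first | rfl | omega | exact absurd ‹_› hne

end Emap

end Moebius

namespace Moebius

open Finsupp MvPolynomial

variable {K : Type} [Field K] {k : ℕ} [NeZero k]

section ExpE
variable (hk : 3 ≤ k)

/-- The exponent vector of the image of the monomial with exponent vector `μ`. -/
noncomputable def expE (μ : Var k →₀ ℕ) : (Fin k ⊕ Fin k) →₀ ℕ :=
  μ.sum fun v n => n • (single (i1 v) 1 + single (i2 v) 1)

lemma moebiusMap_monomial (μ : Var k →₀ ℕ) :
    moebiusMap K k (monomial μ 1) = monomial (expE μ) 1 := by
  rw [moebiusMap_eq, aeval_monomial, expE, monomial_finsupp_sum_index, map_one, one_mul, C_1,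
    one_mul]
  apply Finsupp.prod_congr
  intro v hv
  rw [X, X, monomial_mul, monomial_pow, one_mul, one_pow]

lemma expE_apply (μ : Var k →₀ ℕ) (w : Fin k ⊕ Fin k) :
    expE μ w = ∑ v : Var k, μ v *
      ((if i1 v = w then 1 else 0) + (if i2 v = w then 1 else 0)) := by
  classical
  rw [expE, Finsupp.sum_apply, Finsupp.sum_fintype]
  · apply Finset.sum_congr rfl
    intro v _
    simp [Finsupp.single_apply, mul_add]
  · intro v
    simp

lemma sum_varEquiv (F : Var k → ℕ) :
    ∑ v : Var k, F v =
      (∑ r : Fin k, F (diagV hk r)) + (∑ r : Fin k, F (fwdV hk r)) +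
        (∑ r : Fin k, F (bwdV hk r)) := by
  rw [← Equiv.sum_comp (varEquiv hk) F, Fintype.sum_sum_type, Fintype.sum_sum_type]
  simp only [varEquiv, Equiv.ofBijective_apply, Sum.elim_inl, Sum.elim_inr]
  exact (add_assoc _ _ _).symm

include hk in
lemma zero_sub_one_val : ((0 : Fin k) - 1).val = k - 1 := by
  rw [Fin.sub_def, val_one' hk]
  simp only [Fin.val_zero, Nat.zero_add]
  exact Nat.mod_eq_of_lt (by omega)

end ExpE

end Moebius

namespace Moebius

open Finsupp MvPolynomial

variable {k : ℕ} [NeZero k]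

section Counts
variable (hk : 3 ≤ k)
include hk

lemma count_fwd_inl (r t : Fin k) :
    ((if i1 (fwdV hk r) = Sum.inl t then 1 else 0) +
      (if i2 (fwdV hk r) = Sum.inl t then (1:ℕ) else 0)) =
    (if r = t then 1 else 0) + (if t ≠ 0 ∧ r = t - 1 then 1 else 0) := by
  rw [i1_fwd hk]
  rcases val_add_one_cases hk r with ⟨h1, h2⟩ | ⟨h1, h2⟩
  · rw [i2_fwd_lt hk h1]
    congr 1
    · simp
    · by_cases ht : r + 1 = t
      · have ht0 : t ≠ 0 := by
          intro h0
          rw [h0] at ht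
          have := congrArg Fin.val ht
          simpa [h2] using this
        have hrt : r = t - 1 := by rw [← ht]; exact (add_sub_cancel_right r 1).symm
        simp [ht, ht0, hrt]
      · have : ¬(t ≠ 0 ∧ r = t - 1) := by
          rintro ⟨ht0, rfl⟩
          exact ht (sub_one_add_one hk ht0)
        simp [ht, this]
  · rw [i2_fwd_last hk h1]
    have : ¬(t ≠ 0 ∧ r = t - 1) := by
      rintro ⟨ht0, rfl⟩
      apply ht0
      have h3 := sub_one_add_one hk ht0
      have h4 := val_add_one_last hk h1
      rw [h3] at h4
      exact Fin.ext h4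
    simp [this]

lemma count_fwd_inr (r t : Fin k) :
    ((if i1 (fwdV hk r) = Sum.inr t then 1 else 0) +
      (if i2 (fwdV hk r) = Sum.inr t then (1:ℕ) else 0)) =
    (if t = 0 ∧ r = t - 1 then 1 else 0) := by
  rw [i1_fwd hk]
  rcases val_add_one_cases hk r with ⟨h1, h2⟩ | ⟨h1, h2⟩
  · rw [i2_fwd_lt hk h1]
    have : ¬(t = 0 ∧ r = t - 1) := by
      rintro ⟨rfl, rfl⟩
      have := zero_sub_one_val hk
      omega
    simp [this]
  · rw [i2_fwd_last hk h1]
    have hr1 : r + 1 = 0 := Fin.ext (by simpa using h2)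
    by_cases ht : t = 0
    · subst ht
      have hrt : r = 0 - 1 := by rw [← hr1]; exact (add_sub_cancel_right r 1).symm
      simp [hr1, hrt]
    · have h2' : ¬ (r + 1 = t) := fun h => ht (h ▸ hr1 ▸ rfl)
      have : ¬(t = 0 ∧ r = t - 1) := by rintro ⟨h, _⟩; exact ht h
      have : Sum.inr (α := Fin k) (r + 1) ≠ Sum.inr t := by
        simpa using fun h => ht (by rw [← h, hr1])
      simp [this, ‹¬(t = 0 ∧ r = t - 1)›]

lemma count_bwd_inl (r t : Fin k) :
    ((if i1 (bwdV hk r) = Sum.inl t then 1 else 0) +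
      (if i2 (bwdV hk r) = Sum.inl t then (1:ℕ) else 0)) =
    (if t = 0 ∧ r = t - 1 then 1 else 0) := by
  rcases val_add_one_cases hk r with ⟨h1, h2⟩ | ⟨h1, h2⟩
  · rw [i1_bwd_lt hk h1, i2_bwd_lt hk h1]
    have : ¬(t = 0 ∧ r = t - 1) := by
      rintro ⟨rfl, rfl⟩
      have := zero_sub_one_val hk
      omega
    simp [this]
  · rw [i1_bwd_last hk h1, i2_bwd_last hk h1]
    have hr1 : r + 1 = 0 := Fin.ext (by simpa using h2)
    by_cases ht : t = 0
    · subst ht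
      have hrt : r = 0 - 1 := by rw [← hr1]; exact (add_sub_cancel_right r 1).symm
      simp [hr1, hrt]
    · have : Sum.inl (β := Fin k) (r + 1) ≠ Sum.inl t := by
        simpa using fun h => ht (by rw [← h, hr1])
      have h3 : ¬(t = 0 ∧ r = t - 1) := by rintro ⟨h, _⟩; exact ht h
      simp [this, h3]

lemma count_bwd_inr (r t : Fin k) :
    ((if i1 (bwdV hk r) = Sum.inr t then 1 else 0) +
      (if i2 (bwdV hk r) = Sum.inr t then (1:ℕ) else 0)) =
    (if r = t then 1 else 0) + (if t ≠ 0 ∧ r = t - 1 then 1 else 0) := by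
  rcases val_add_one_cases hk r with ⟨h1, h2⟩ | ⟨h1, h2⟩
  · rw [i1_bwd_lt hk h1, i2_bwd_lt hk h1]
    congr 1
    · simp
    · by_cases ht : r + 1 = t
      · have ht0 : t ≠ 0 := by
          intro h0
          rw [h0] at ht
          have := congrArg Fin.val ht
          simpa [h2] using this
        have hrt : r = t - 1 := by rw [← ht]; exact (add_sub_cancel_right r 1).symm
        simp [ht, ht0, hrt]
      · have : ¬(t ≠ 0 ∧ r = t - 1) := by
          rintro ⟨ht0, rfl⟩
          exact ht (sub_one_add_one hk ht0)
        simp [ht, this]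
  · rw [i1_bwd_last hk h1, i2_bwd_last hk h1]
    have : ¬(t ≠ 0 ∧ r = t - 1) := by
      rintro ⟨ht0, rfl⟩
      apply ht0
      have h3 := sub_one_add_one hk ht0
      have h4 := val_add_one_last hk h1
      rw [h3] at h4
      exact Fin.ext h4
    rw [if_neg this]
    simp

lemma count_diag_inl (r t : Fin k) :
    ((if i1 (diagV hk r) = Sum.inl t then 1 else 0) +
      (if i2 (diagV hk r) = Sum.inl t then (1:ℕ) else 0)) = (if r = t then 1 else 0) := by
  rw [i1_diag hk, i2_diag hk]
  simp

lemma count_diag_inr (r t : Fin k) :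
    ((if i1 (diagV hk r) = Sum.inr t then 1 else 0) +
      (if i2 (diagV hk r) = Sum.inr t then (1:ℕ) else 0)) = (if r = t then 1 else 0) := by
  rw [i1_diag hk, i2_diag hk]
  simp

end Counts

end Moebius

namespace Moebius

open Finsupp MvPolynomial

variable {k : ℕ} [NeZero k]

section ExpE2
variable (hk : 3 ≤ k)

lemma sum_delta (f : Fin k → ℕ) (t : Fin k) :
    (∑ r : Fin k, f r * (if r = t then 1 else 0)) = f t := by
  simp [mul_ite, Finset.sum_ite_eq']

lemma sum_delta2 (f : Fin k → ℕ) (c : Prop) [Decidable c] (t : Fin k) :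
    (∑ r : Fin k, f r * (if c ∧ r = t then 1 else 0)) = if c then f t else 0 := by
  by_cases h : c <;> simp [h, mul_ite, Finset.sum_ite_eq']

include hk

lemma expE_inl (μ : Var k →₀ ℕ) (t : Fin k) :
    expE μ (Sum.inl t) = μ (diagV hk t) + μ (fwdV hk t) +
      (if t = 0 then μ (bwdV hk (t - 1)) else μ (fwdV hk (t - 1))) := by
  rw [expE_apply, sum_varEquiv hk]
  have hd := Finset.sum_congr rfl fun r (_ : r ∈ Finset.univ) =>
    congrArg (μ (diagV hk r) * ·) (count_diag_inl hk r t)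
  have hf := Finset.sum_congr rfl fun r (_ : r ∈ Finset.univ) =>
    congrArg (μ (fwdV hk r) * ·) (count_fwd_inl hk r t)
  have hb := Finset.sum_congr rfl fun r (_ : r ∈ Finset.univ) =>
    congrArg (μ (bwdV hk r) * ·) (count_bwd_inl hk r t)
  rw [hd, hf, hb, sum_delta]
  simp only [mul_add, Finset.sum_add_distrib, sum_delta, sum_delta2]
  by_cases ht : t = 0 <;> simp [ht] <;> ring

lemma expE_inr (μ : Var k →₀ ℕ) (t : Fin k) :
    expE μ (Sum.inr t) = μ (diagV hk t) + μ (bwdV hk t) +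
      (if t = 0 then μ (fwdV hk (t - 1)) else μ (bwdV hk (t - 1))) := by
  rw [expE_apply, sum_varEquiv hk]
  have hd := Finset.sum_congr rfl fun r (_ : r ∈ Finset.univ) =>
    congrArg (μ (diagV hk r) * ·) (count_diag_inr hk r t)
  have hf := Finset.sum_congr rfl fun r (_ : r ∈ Finset.univ) =>
    congrArg (μ (fwdV hk r) * ·) (count_fwd_inr hk r t)
  have hb := Finset.sum_congr rfl fun r (_ : r ∈ Finset.univ) =>
    congrArg (μ (bwdV hk r) * ·) (count_bwd_inr hk r t)
  rw [hd, hf, hb, sum_delta2]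
  simp only [mul_add, Finset.sum_add_distrib, sum_delta, sum_delta2]
  by_cases ht : t = 0 <;> simp [ht] <;> ring

end ExpE2

end Moebius

namespace Moebius

open Finsupp MvPolynomial

variable {k : ℕ} [NeZero k]

section Inj
variable (hk : 3 ≤ k)

/-- A normal exponent vector: no edge uses both its off-diagonal variables. -/
def Normal (hk : 3 ≤ k) (μ : Var k →₀ ℕ) : Prop :=
  ∀ r : Fin k, μ (fwdV hk r) = 0 ∨ μ (bwdV hk r) = 0

include hk

lemma expE_inj (hke : Even k) {μ μ' : Var k →₀ ℕ}
    (hμ : Normal hk μ) (hμ' : Normal hk μ') (h : expE μ = expE μ') : μ = μ' := by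
  set a : Fin k → ℕ := fun r => μ (fwdV hk r) with ha
  set b : Fin k → ℕ := fun r => μ (bwdV hk r) with hb
  set e : Fin k → ℕ := fun r => μ (diagV hk r) with he
  set a' : Fin k → ℕ := fun r => μ' (fwdV hk r) with ha'
  set b' : Fin k → ℕ := fun r => μ' (bwdV hk r) with hb'
  set e' : Fin k → ℕ := fun r => μ' (diagV hk r) with he'
  have L : ∀ t : Fin k, e t + a t + (if t = 0 then b (t-1) else a (t-1)) =
      e' t + a' t + (if t = 0 then b' (t-1) else a' (t-1)) := by
    intro t
    have := DFunLike.congr_fun h (Sum.inl t)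
    rwa [expE_inl hk, expE_inl hk] at this
  have R : ∀ t : Fin k, e t + b t + (if t = 0 then a (t-1) else b (t-1)) =
      e' t + b' t + (if t = 0 then a' (t-1) else b' (t-1)) := by
    intro t
    have := DFunLike.congr_fun h (Sum.inr t)
    rwa [expE_inr hk, expE_inr hk] at this
  set u : Fin k → ℤ := fun r => (a r : ℤ) + b' r - b r - a' r with hu
  have hrec : ∀ t : Fin k, t ≠ 0 → u t = -u (t - 1) := by
    intro t ht
    have hL := L t
    have hR := R t
    simp only [if_neg ht] at hL hR
    simp only [hu]
    omega
  have h0 : u 0 = u (0 - 1) := by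
    have hL := L 0
    have hR := R 0
    simp only [if_pos] at hL hR
    simp only [hu]
    omega
  have hpow : ∀ n : ℕ, ∀ hn : n < k, u ⟨n, hn⟩ = (-1) ^ n * u 0 := by
    intro n
    induction n with
    | zero =>
      intro hn
      have : (⟨0, hn⟩ : Fin k) = 0 := Fin.ext (by simp)
      rw [this]
      simp
    | succ m ih =>
      intro hn
      have hm : m < k := by omega
      have ht0 : (⟨m + 1, hn⟩ : Fin k) ≠ 0 := by
        intro hc
        have := congrArg Fin.val hc
        simp at this
      have hsub : (⟨m + 1, hn⟩ : Fin k) - 1 = ⟨m, hm⟩ := by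
        apply Fin.ext
        rw [sub_one_val hk ht0]
        simp
      rw [hrec ⟨m + 1, hn⟩ ht0, hsub, ih hm, pow_succ]
      ring
  have hu0 : u 0 = 0 := by
    have hk0 : 0 < k := by omega
    have hlast : ((0 : Fin k) - 1) = ⟨k - 1, by omega⟩ := by
      apply Fin.ext
      rw [zero_sub_one_val hk]
    have := hpow (k - 1) (by omega)
    rw [← hlast, ← h0] at this
    have hodd : Odd (k - 1) := by
      rcases hke with ⟨m, hm⟩
      exact ⟨m - 1, by omega⟩
    rw [hodd.neg_one_pow] at this
    omega
  have huz : ∀ t : Fin k, u t = 0 := by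
    intro t
    have := hpow t.val t.isLt
    rw [Fin.eta, hu0, mul_zero] at this
    exact this
  have hab : ∀ r : Fin k, a r = a' r ∧ b r = b' r := by
    intro r
    have h1 : (a r : ℤ) + b' r - b r - a' r = 0 := huz r
    have h2 : a r = 0 ∨ b r = 0 := hμ r
    have h3 : a' r = 0 ∨ b' r = 0 := hμ' r
    omega
  have hee : ∀ t : Fin k, e t = e' t := by
    intro t
    have hL := L t
    by_cases ht : t = 0
    · rw [if_pos ht, if_pos ht] at hL
      have h1 := (hab (t-1)).2
      have h2 := (hab t).1
      omega
    · rw [if_neg ht, if_neg ht] at hL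
      have h1 := (hab (t-1)).1
      have h2 := (hab t).1
      omega
  ext v
  rcases var_cases hk v with ⟨r, rfl⟩ | ⟨r, rfl⟩ | ⟨r, rfl⟩
  · exact hee r
  · exact (hab r).1
  · exact (hab r).2

end Inj

end Moebius

namespace Moebius

open Finsupp MvPolynomial

variable {K : Type} [Field K] {k : ℕ} [NeZero k]

section MapZero
variable (hk : 3 ≤ k)

lemma map_X (v : Var k) : moebiusMap K k (X v) = X (i1 v) * X (i2 v) := by
  rw [moebiusMap_eq, aeval_X]

lemma fij_symm {i j : Fin k} (h : (cycleGraph' k).Adj i j) :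
    fij K h = fij K h.symm := by
  show (X (⟨(i, i), Or.inl rfl⟩ : Var k) * X (⟨(j, j), Or.inl rfl⟩ : Var k) -
      X (⟨(i, j), Or.inr h⟩ : Var k) * X (⟨(j, i), Or.inr h.symm⟩ : Var k)
        : MvPolynomial (Var k) K) =
    X (⟨(j, j), Or.inl rfl⟩ : Var k) * X (⟨(i, i), Or.inl rfl⟩ : Var k) -
      X (⟨(j, i), Or.inr h.symm⟩ : Var k) * X (⟨(i, j), Or.inr h⟩ : Var k)
  ring

include hk

lemma map_F_zero (r : Fin k) : moebiusMap K k (fij K (adj_fwd hk r)) = 0 := by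
  show moebiusMap K k
    (X (diagV hk r) * X (diagV hk (r + 1)) - X (fwdV hk r) * X (bwdV hk r)) = 0
  rw [map_sub, map_mul, map_mul, map_X, map_X, map_X, map_X,
    i1_diag hk, i2_diag hk, i1_diag hk, i2_diag hk, i1_fwd hk]
  rcases val_add_one_cases hk r with ⟨h1, _⟩ | ⟨h1, _⟩
  · rw [i2_fwd_lt hk h1, i1_bwd_lt hk h1, i2_bwd_lt hk h1]
    ring
  · rw [i2_fwd_last hk h1, i1_bwd_last hk h1, i2_bwd_last hk h1]
    ring

lemma map_fij_zero {i j : Fin k} (h : (cycleGraph' k).Adj i j) :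
    moebiusMap K k (fij K h) = 0 := by
  rcases h.2 with hc | hc
  · have hj : j = i + 1 := Fin.ext (by rw [val_add_one hk, hc])
    subst hj
    exact map_F_zero hk i
  · have hi : i = j + 1 := Fin.ext (by rw [val_add_one hk, hc])
    subst hi
    rw [fij_symm]
    exact map_F_zero hk j

lemma PG_le_ker :
    PG K k (cycleGraph' k) ≤ RingHom.ker (moebiusMap K k).toRingHom := by
  rw [PG, Ideal.span_le]
  rintro f ⟨i, j, h, hij, rfl⟩
  exact map_fij_zero hk h

lemma F_mem (r : Fin k) : fij K (adj_fwd hk r) ∈ PG K k (cycleGraph' k) := by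
  rcases val_add_one_cases hk r with ⟨h1, h2⟩ | ⟨h1, h2⟩
  · exact Ideal.subset_span ⟨r, r + 1, adj_fwd hk r, by rw [Fin.lt_def, h2]; omega, rfl⟩
  · rw [fij_symm]
    refine Ideal.subset_span ⟨r + 1, r, (adj_fwd hk r).symm, ?_, rfl⟩
    rw [Fin.lt_def, h2]
    omega

end MapZero

end Moebius

namespace Moebius

open Finsupp MvPolynomial

variable {K : Type} [Field K] {k : ℕ} [NeZero k]

section Span
variable (hk : 3 ≤ k)

/-- The sup of `P_G` and the span of normal monomials. -/
noncomputable def Wmod (K : Type) [Field K] (hk : 3 ≤ k) :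
    Submodule K (MvPolynomial (Var k) K) :=
  Submodule.restrictScalars K (PG K k (cycleGraph' k)) ⊔
    Submodule.span K {f | ∃ μ : Var k →₀ ℕ, Normal hk μ ∧ f = monomial μ 1}

include hk

lemma monomial_mem_W (d : ℕ) :
    ∀ μ : Var k →₀ ℕ, (∑ s : Fin k, (μ (fwdV hk s) + μ (bwdV hk s))) = d →
      ∀ c : K, monomial μ c ∈ Wmod K hk := by
  induction d using Nat.strong_induction_on with
  | _ d ih =>
    intro μ hd c
    by_cases hN : Normal hk μ
    · apply Submodule.mem_sup_right
      have hmc : monomial μ c = c • monomial μ (1 : K) := by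
        rw [MvPolynomial.smul_monomial, smul_eq_mul, mul_one]
      rw [hmc]
      exact Submodule.smul_mem _ c (Submodule.subset_span ⟨μ, hN, rfl⟩)
    · rw [Normal] at hN
      push_neg at hN
      obtain ⟨r, hfr, hbr⟩ := hN
      have hfr1 : 1 ≤ μ (fwdV hk r) := Nat.one_le_iff_ne_zero.mpr hfr
      have hbr1 : 1 ≤ μ (bwdV hk r) := Nat.one_le_iff_ne_zero.mpr hbr
      set ν := μ - single (fwdV hk r) 1 - single (bwdV hk r) 1 with hν
      have hfb : fwdV hk r ≠ bwdV hk r := fwdV_ne_bwdV hk r r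
      have hμeq : μ = ν + single (fwdV hk r) 1 + single (bwdV hk r) 1 := by
        ext v
        simp only [hν, Finsupp.add_apply, Finsupp.tsub_apply, Finsupp.single_apply]
        split_ifs with h1 h2 h2
        · exact absurd (h1.trans h2.symm) hfb
        · subst h1; omega
        · subst h2; omega
        · omega
      set μ' := ν + single (diagV hk r) 1 + single (diagV hk (r + 1)) 1 with hμ'
      have hfval : ∀ s : Fin k, μ' (fwdV hk s) + (if s = r then 1 else 0) = μ (fwdV hk s) := by
        intro s
        have e1 : Finsupp.single (diagV hk r) 1 (fwdV hk s) = 0 :=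
          Finsupp.single_eq_of_ne' (diagV_ne_fwdV hk r s)
        have e2 : Finsupp.single (diagV hk (r + 1)) 1 (fwdV hk s) = 0 :=
          Finsupp.single_eq_of_ne' (diagV_ne_fwdV hk (r + 1) s)
        have e3 : Finsupp.single (bwdV hk r) (1 : ℕ) (fwdV hk s) = 0 :=
          Finsupp.single_eq_of_ne' fun h => (fwdV_ne_bwdV hk s r) h.symm
        have e4 : Finsupp.single (fwdV hk r) (1 : ℕ) (fwdV hk s) =
            if s = r then 1 else 0 := by
          rw [Finsupp.single_apply]
          by_cases h : s = r
          · simp [h]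
          · rw [if_neg (fun hh => h (fwdV_inj hk hh).symm), if_neg h]
        simp only [hμ', hν, Finsupp.add_apply, Finsupp.tsub_apply, e1, e2, e3, e4]
        split_ifs with h
        · subst h; omega
        · omega
      have hbval : ∀ s : Fin k, μ' (bwdV hk s) + (if s = r then 1 else 0) = μ (bwdV hk s) := by
        intro s
        have e1 : Finsupp.single (diagV hk r) 1 (bwdV hk s) = 0 :=
          Finsupp.single_eq_of_ne' (diagV_ne_bwdV hk r s)
        have e2 : Finsupp.single (diagV hk (r + 1)) 1 (bwdV hk s) = 0 :=
          Finsupp.single_eq_of_ne' (diagV_ne_bwdV hk (r + 1) s)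
        have e3 : Finsupp.single (fwdV hk r) (1 : ℕ) (bwdV hk s) = 0 :=
          Finsupp.single_eq_of_ne' (fwdV_ne_bwdV hk r s)
        have e4 : Finsupp.single (bwdV hk r) (1 : ℕ) (bwdV hk s) =
            if s = r then 1 else 0 := by
          rw [Finsupp.single_apply]
          by_cases h : s = r
          · simp [h]
          · rw [if_neg (fun hh => h (bwdV_inj hk hh).symm), if_neg h]
        simp only [hμ', hν, Finsupp.add_apply, Finsupp.tsub_apply, e1, e2, e3, e4]
        split_ifs with h
        · subst h; omega
        · omega
      have hsum : (∑ s : Fin k, (μ' (fwdV hk s) + μ' (bwdV hk s))) + 2 = d := by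
        rw [← hd]
        have : ∀ s : Fin k, s ∈ Finset.univ →
            μ (fwdV hk s) + μ (bwdV hk s) =
              (μ' (fwdV hk s) + μ' (bwdV hk s)) + (if s = r then 2 else 0) := by
          intro s _
          have h1 := hfval s
          have h2 := hbval s
          by_cases h : s = r
          · rw [if_pos h] at h1 h2 ⊢; omega
          · rw [if_neg h] at h1 h2 ⊢; omega
        have h2 : (∑ s : Fin k, if s = r then 2 else 0) = 2 :=
          Finset.sum_ite_eq' Finset.univ r (fun _ => 2) |>.trans (by simp)
        have h3 : (∑ s : Fin k, (μ' (fwdV hk s) + μ' (bwdV hk s))) =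
            (∑ s : Fin k, μ' (fwdV hk s)) + ∑ s : Fin k, μ' (bwdV hk s) :=
          Finset.sum_add_distrib
        have h4 : (∑ s : Fin k, (μ (fwdV hk s) + μ (bwdV hk s))) =
            ((∑ s : Fin k, μ' (fwdV hk s)) + ∑ s : Fin k, μ' (bwdV hk s)) + 2 := by
          rw [Finset.sum_congr rfl this, Finset.sum_add_distrib, Finset.sum_add_distrib, h2]
        omega
      have hfij : fij K (adj_fwd hk r) =
          X (diagV hk r) * X (diagV hk (r + 1)) - X (fwdV hk r) * X (bwdV hk r) := rfl
      have h1 : monomial μ c = monomial ν c * (X (fwdV hk r) * X (bwdV hk r)) := by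
        simp only [X, monomial_mul, mul_one]
        rw [hμeq, add_assoc]
      have h2 : monomial μ' c = monomial ν c * (X (diagV hk r) * X (diagV hk (r + 1))) := by
        simp only [X, monomial_mul, mul_one]
        rw [hμ', add_assoc]
      have hpoly : monomial μ c =
          monomial μ' c - monomial ν c * fij K (adj_fwd hk r) := by
        rw [h1, h2, hfij]
        ring
      rw [hpoly]
      apply Submodule.sub_mem
      · exact ih _ (by omega) μ' rfl c
      · exact Submodule.mem_sup_left (Ideal.mul_mem_left _ _ (F_mem hk r))

lemma mem_W (f : MvPolynomial (Var k) K) : f ∈ Wmod K hk := by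
  rw [← MvPolynomial.support_sum_monomial_coeff f]
  exact Submodule.sum_mem _ fun v _ => monomial_mem_W hk _ v rfl _

end Span

end Moebius

namespace Moebius

open Finsupp MvPolynomial

variable {K : Type} [Field K] {k : ℕ} [NeZero k]

section Final
variable (hk : 3 ≤ k)
include hk

lemma normal_span_eq_range :
    {f : MvPolynomial (Var k) K | ∃ μ : Var k →₀ ℕ, Normal hk μ ∧ f = monomial μ 1} =
      Set.range (fun i : {μ : Var k →₀ ℕ // Normal hk μ} => monomial i.1 (1 : K)) := by
  ext f
  constructor
  · rintro ⟨μ, hμ, rfl⟩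
    exact ⟨⟨μ, hμ⟩, rfl⟩
  · rintro ⟨⟨μ, hμ⟩, rfl⟩
    exact ⟨μ, hμ, rfl⟩

lemma ker_le_PG (hke : Even k) :
    RingHom.ker (moebiusMap K k).toRingHom ≤ PG K k (cycleGraph' k) := by
  intro f hf
  have hf0 : moebiusMap K k f = 0 := RingHom.mem_ker.mp hf
  obtain ⟨g, hg, n, hn, rfl⟩ := Submodule.mem_sup.mp (mem_W hk f)
  have hgPG : g ∈ PG K k (cycleGraph' k) := hg
  have hgz : moebiusMap K k g = 0 := RingHom.mem_ker.mp (PG_le_ker hk hgPG)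
  have hnz : moebiusMap K k n = 0 := by
    rw [map_add, hgz, zero_add] at hf0
    exact hf0
  rw [normal_span_eq_range hk] at hn
  obtain ⟨c, hc⟩ := Finsupp.mem_span_range_iff_exists_finsupp.mp hn
  have hli : LinearIndependent K
      (fun i : {μ : Var k →₀ ℕ // Normal hk μ} => monomial (expE i.1) (1 : K)) := by
    have hinj : Function.Injective
        (fun i : {μ : Var k →₀ ℕ // Normal hk μ} => expE (k := k) i.1) :=
      fun i j h => Subtype.ext (expE_inj hk hke i.2 j.2 h)
    exact (basisMonomials (Fin k ⊕ Fin k) K).linearIndependent.comp _ hinj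
  have hmap : (c.sum fun i a => a • monomial (expE i.1) (1 : K)) = 0 := by
    rw [← hnz, ← hc, map_finsuppSum]
    apply Finsupp.sum_congr
    intro i _
    rw [map_smul, moebiusMap_monomial]
  have hc0 : c = 0 := by
    apply linearIndependent_iff.mp hli
    rw [Finsupp.linearCombination_apply]
    exact hmap
  have hn0 : n = 0 := by
    rw [← hc, hc0, Finsupp.sum_zero_index]
  rw [hn0, add_zero]
  exact hgPG

end Final

end Moebius

/-- For an even cycle `C` of length `k ≥ 4`, the ideal `P_C` equals the toric
ideal `I_{C̄}` of the Möbius-band graph `C̄`, i.e. the kernel of the homomorphism above. -/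
theorem PG_cycle_eq_toric_moebius (K : Type) [Field K] (k : ℕ) (hk : 4 ≤ k) (hke : Even k) :
    PG K k (cycleGraph' k) = RingHom.ker (moebiusMap K k).toRingHom := by
  haveI : NeZero k := ⟨by omega⟩
  have hk3 : 3 ≤ k := by omega
  exact le_antisymm (Moebius.PG_le_ker hk3) (Moebius.ker_le_PG hk3 hke)
end
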